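/- Suppose: (i) the test with confidence regions (𝓕_N) is c-consistent for F, and almost surely the empirical distribution F̂_N = (1/N)Σ_{i=1}^N δ_{ξ^i} belongs to 𝓕_N for every N; (ii) c is equicontinuous in x over Ξ and c(x;·) is continuous on Ξ for each x, with c(x;·) integrable under F and under every measure in every 𝓕_N; (iii) X is closed and either X is bounded, or there is a Borel set D ⊆ Ξ with F(D) > 0 such that c(x;ξ) → ∞ as ‖x‖ → ∞ uniformly over ξ ∈ D and liminf_{‖x‖→∞} inf_{ξ∉D} c(x;ξ) > −∞; (iv) either Ξ is bounded, or there exists a continuous φ : Ξ → [0,∞) such that almost surely sup_{F₀∈𝓕_N} |E_{F₀}[φ(ξ)] − (1/N)Σ_{i=1}^N φ(ξ^i)| → 0 and, for each x ∈ X, |c(x;ξ)| = O(φ(ξ)). Then almost surely: (1) sup_{x∈K} |C(x;𝓕_N) − E_F[c(x;ξ)]| → 0 for every compact K ⊆ X; (2) inf_{x∈X} C(x;𝓕_N) → inf_{x∈X} E_F[c(x;ξ)]; (3) every sequence (x_N) with x_N ∈ argmin_{x∈X} C(x;𝓕_N) has at least one limit point, and all of its limit points lie in argmin_{x∈X} E_F[c(x;ξ)].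 -/

import Mathlib

open MeasureTheory Filter Topology
open scoped ENNReal

/-- The worst-case expected cost `C(x;𝓕) = sup_{F₀ ∈ 𝓕} E_{F₀}[c(x;ξ)]`,
as an extended real number, over a set of (bundled) probability measures. -/
noncomputable def worstCaseP {d dx : ℕ}
    (c : EuclideanSpace ℝ (Fin dx) → EuclideanSpace ℝ (Fin d) → ℝ)
    (𝓕 : Set (ProbabilityMeasure (EuclideanSpace ℝ (Fin d))))
    (x : EuclideanSpace ℝ (Fin dx)) : EReal :=
  ⨆ F₀ ∈ 𝓕, ((∫ ξ, c x ξ ∂F₀.toMeasure : ℝ) : EReal)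

/-- The empirical measure `(1/N) ∑_{i<N} δ_{ξ^i}` of the first `N` data points. -/
noncomputable def empiricalMeasure {d : ℕ} (N : ℕ)
    (ξ : ℕ → EuclideanSpace ℝ (Fin d)) : Measure (EuclideanSpace ℝ (Fin d)) :=
  ((N : ℝ≥0∞))⁻¹ • ∑ i ∈ Finset.range N, Measure.dirac (ξ i)

lemma aux_int_close {E : Type*} [MeasurableSpace E] {μ : Measure E} [IsProbabilityMeasure μ]
    {Ξ : Set E} (hsupp : μ Ξᶜ = 0)
    {g h : E → ℝ} (hg : Integrable g μ) (hh : Integrable h μ) {ε : ℝ}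
    (hbd : ∀ ζ ∈ Ξ, |g ζ - h ζ| ≤ ε) :
    |∫ ζ, g ζ ∂μ - ∫ ζ, h ζ ∂μ| ≤ ε := by
  have hae : ∀ᵐ ζ ∂μ, ζ ∈ Ξ := by
    rw [ae_iff]
    exact hsupp
  rw [← integral_sub hg hh]
  calc |∫ ζ, g ζ - h ζ ∂μ| ≤ ∫ ζ, |g ζ - h ζ| ∂μ := by
        simpa using norm_integral_le_integral_norm (fun ζ => g ζ - h ζ)
    _ ≤ ∫ _ζ, ε ∂μ := by
        refine integral_mono_ae (hg.sub hh).abs (integrable_const ε) ?_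
        exact hae.mono fun ζ hζ => hbd ζ hζ
    _ = ε := by simp

lemma aux_integrable_dirac {E : Type*} [MeasurableSpace E] [MeasurableSingletonClass E]
    (g : E → ℝ) (a : E) : Integrable g (Measure.dirac a) := by
  have : g =ᵐ[Measure.dirac a] fun _ => g a := by
    rw [MeasureTheory.ae_dirac_eq a]; exact Filter.eventually_pure.2 rfl
  exact (integrable_const (g a)).congr this.symm

lemma aux_empirical_integral {d : ℕ} {N : ℕ} (ξs : ℕ → EuclideanSpace ℝ (Fin d))
    (g : EuclideanSpace ℝ (Fin d) → ℝ) :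
    ∫ ζ, g ζ ∂(empiricalMeasure N ξs) = (∑ i ∈ Finset.range N, g (ξs i)) / N := by
  rw [empiricalMeasure, integral_smul_measure,
    integral_finset_sum_measure (fun i _ => aux_integrable_dirac g (ξs i))]
  simp only [integral_dirac, ENNReal.toReal_inv, smul_eq_mul]
  rw [inv_mul_eq_div]
  norm_num

lemma aux_empirical_apply_zero {d : ℕ} {N : ℕ} (ξs : ℕ → EuclideanSpace ℝ (Fin d))
    {s : Set (EuclideanSpace ℝ (Fin d))} (hs : MeasurableSet s)
    (h : empiricalMeasure N ξs s = 0) {i : ℕ} (hi : i < N) : ξs i ∉ s := by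
  intro hmem
  rw [empiricalMeasure, Measure.smul_apply, Measure.finset_sum_apply] at h
  rcases mul_eq_zero.1 h with h0 | h0
  · simp only [ENNReal.inv_eq_zero, ENNReal.natCast_ne_top] at h0
  · have := (Finset.sum_eq_zero_iff.1 h0) i (Finset.mem_range.2 hi)
    rw [Measure.dirac_apply' _ hs, Set.indicator_of_mem hmem] at this
    simp at this

lemma abstract_final {d dx : ℕ}
    (X : Set (EuclideanSpace ℝ (Fin dx))) (hXcl : IsClosed X)
    (c : EuclideanSpace ℝ (Fin dx) → EuclideanSpace ℝ (Fin d) → ℝ)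
    (f : EuclideanSpace ℝ (Fin dx) → ℝ)
    (𝓖 : ℕ → Set (ProbabilityMeasure (EuclideanSpace ℝ (Fin d))))
    (h𝓖ne : ∀ N, (𝓖 N).Nonempty)
    (hmain : ∀ K ⊆ X, IsCompact K → ∀ ε > (0:ℝ), ∀ᶠ N in atTop, ∀ x ∈ K, ∀ G ∈ 𝓖 N,
      |(∫ ζ, c x ζ ∂G.toMeasure) - f x| ≤ ε)
    (hclose : ∀ x ∈ X, ∀ ε > (0:ℝ), ∃ δ > (0:ℝ), ∀ x' ∈ X, ‖x - x'‖ < δ →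
      ∀ N : ℕ, ∀ G ∈ 𝓖 N, |(∫ ζ, c x ζ ∂G.toMeasure) - ∫ ζ, c x' ζ ∂G.toMeasure| ≤ ε)
    (K₀ : Set (EuclideanSpace ℝ (Fin dx))) (x' : EuclideanSpace ℝ (Fin dx))
    (hK₀X : K₀ ⊆ X) (hK₀c : IsCompact K₀) (hxs : x' ∈ K₀)
    (hmin : ∀ x ∈ X, f x' ≤ f x)
    (hout : ∀ᶠ N in atTop, ∀ x ∈ X, x ∉ K₀ → ((f x' + 1 : ℝ) : EReal) ≤ worstCaseP c (𝓖 N) x) :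
    (∀ K ⊆ X, IsCompact K → ∀ ε > (0:ℝ), ∀ᶠ N in atTop, ∀ x ∈ K,
        ((f x - ε : ℝ) : EReal) ≤ worstCaseP c (𝓖 N) x ∧
          worstCaseP c (𝓖 N) x ≤ ((f x + ε : ℝ) : EReal)) ∧
      Tendsto (fun N => ⨅ x ∈ X, worstCaseP c (𝓖 N) x) atTop
        (𝓝 (⨅ x ∈ X, ((f x : ℝ) : EReal))) ∧
      (∀ xseq : ℕ → EuclideanSpace ℝ (Fin dx),
        (∀ N, xseq N ∈ X ∧ ∀ y ∈ X, worstCaseP c (𝓖 N) (xseq N) ≤ worstCaseP c (𝓖 N) y) →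
        (∃ p, MapClusterPt p atTop xseq) ∧
        (∀ p, MapClusterPt p atTop xseq → p ∈ X ∧ ∀ y ∈ X, f p ≤ f y)) := by
  have Wub : ∀ {N : ℕ} {x : EuclideanSpace ℝ (Fin dx)} {b : ℝ},
      (∀ G ∈ 𝓖 N, (∫ ζ, c x ζ ∂G.toMeasure) ≤ b) → worstCaseP c (𝓖 N) x ≤ ((b:ℝ):EReal) := by
    intro N x b h
    simp only [worstCaseP]
    exact iSup₂_le fun G hG => EReal.coe_le_coe_iff.2 (h G hG)
  have Wlb : ∀ {N : ℕ} {x : EuclideanSpace ℝ (Fin dx)} {b : ℝ},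
      (∀ G ∈ 𝓖 N, b ≤ ∫ ζ, c x ζ ∂G.toMeasure) → ((b:ℝ):EReal) ≤ worstCaseP c (𝓖 N) x := by
    intro N x b h
    obtain ⟨G, hG⟩ := h𝓖ne N
    simp only [worstCaseP]
    exact le_iSup₂_of_le G hG (EReal.coe_le_coe_iff.2 (h G hG))
  have Wmem : ∀ (N : ℕ) (x : EuclideanSpace ℝ (Fin dx)) (G : ProbabilityMeasure _), G ∈ 𝓖 N →
      ((∫ ζ, c x ζ ∂G.toMeasure : ℝ) : EReal) ≤ worstCaseP c (𝓖 N) x := by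
    intro N x G hG
    simp only [worstCaseP]
    exact le_iSup₂ (f := fun (G : ProbabilityMeasure (EuclideanSpace ℝ (Fin d))) _ =>
      ((∫ ζ, c x ζ ∂G.toMeasure : ℝ) : EReal)) G hG
  have part1 : ∀ K ⊆ X, IsCompact K → ∀ ε > (0:ℝ), ∀ᶠ N in atTop, ∀ x ∈ K,
      ((f x - ε : ℝ) : EReal) ≤ worstCaseP c (𝓖 N) x ∧
        worstCaseP c (𝓖 N) x ≤ ((f x + ε : ℝ) : EReal) := by
    intro K hKX hKc ε hε
    filter_upwards [hmain K hKX hKc ε hε] with N h x hx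
    refine ⟨Wlb fun G hG => ?_, Wub fun G hG => ?_⟩
    · have := (abs_le.1 (h x hx G hG)).1; linarith
    · have := (abs_le.1 (h x hx G hG)).2; linarith
  have hbound : ∀ ε > (0:ℝ), ∀ᶠ N in atTop,
      ((f x' - ε : ℝ):EReal) ≤ (⨅ x ∈ X, worstCaseP c (𝓖 N) x) ∧
      (⨅ x ∈ X, worstCaseP c (𝓖 N) x) ≤ ((f x' + ε : ℝ):EReal) := by
    intro ε hε
    filter_upwards [hmain K₀ hK₀X hK₀c ε hε, hout] with N h1 h2
    constructor
    · refine le_iInf₂ fun x hx => ?_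
      by_cases hxK : x ∈ K₀
      · calc ((f x' - ε:ℝ):EReal) ≤ ((f x - ε:ℝ):EReal) :=
              EReal.coe_le_coe_iff.2 (by have := hmin x hx; linarith)
          _ ≤ worstCaseP c (𝓖 N) x :=
              Wlb fun G hG => by have := (abs_le.1 (h1 x hxK G hG)).1; linarith
      · calc ((f x' - ε:ℝ):EReal) ≤ ((f x' + 1:ℝ):EReal) :=
              EReal.coe_le_coe_iff.2 (by linarith)
          _ ≤ worstCaseP c (𝓖 N) x := h2 x hx hxK
    · exact iInf₂_le_of_le x' (hK₀X hxs)
        (Wub fun G hG => by have := (abs_le.1 (h1 x' hxs G hG)).2; linarith)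
  have hv : (⨅ x ∈ X, ((f x : ℝ) : EReal)) = ((f x' : ℝ) : EReal) :=
    le_antisymm (iInf₂_le x' (hK₀X hxs)) (le_iInf₂ fun x hx => EReal.coe_le_coe_iff.2 (hmin x hx))
  have part2 : Tendsto (fun N => ⨅ x ∈ X, worstCaseP c (𝓖 N) x) atTop
      (𝓝 (⨅ x ∈ X, ((f x : ℝ) : EReal))) := by
    rw [hv]
    refine tendsto_order.2 ⟨?_, ?_⟩
    · intro a ha
      obtain ⟨ε, hε, haε⟩ : ∃ ε > (0:ℝ), a < ((f x' - ε : ℝ) : EReal) := by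
        induction a using EReal.rec with
        | bot => exact ⟨1, one_pos, EReal.bot_lt_coe _⟩
        | coe r =>
          have hr : r < f x' := EReal.coe_lt_coe_iff.1 ha
          exact ⟨(f x' - r)/2, by linarith, EReal.coe_lt_coe_iff.2 (by linarith)⟩
        | top => exact absurd ha (not_top_lt)
      filter_upwards [hbound ε hε] with N h
      exact lt_of_lt_of_le haε h.1
    · intro b hb
      obtain ⟨ε, hε, hbε⟩ : ∃ ε > (0:ℝ), ((f x' + ε : ℝ) : EReal) < b := by
        induction b using EReal.rec with
        | bot => exact absurd hb (not_lt_bot)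
        | coe r =>
          have hr : f x' < r := EReal.coe_lt_coe_iff.1 hb
          exact ⟨(r - f x')/2, by linarith, EReal.coe_lt_coe_iff.2 (by linarith)⟩
        | top => exact ⟨1, one_pos, EReal.coe_lt_top _⟩
      filter_upwards [hbound ε hε] with N h
      exact lt_of_le_of_lt h.2 hbε
  refine ⟨part1, part2, ?_⟩
  intro xseq hxseq
  have hxX : ∀ N, xseq N ∈ X := fun N => (hxseq N).1
  have hseqmin : ∀ N, ∀ y ∈ X, worstCaseP c (𝓖 N) (xseq N) ≤ worstCaseP c (𝓖 N) y :=
    fun N => (hxseq N).2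
  have hevK₀ : ∀ᶠ N in atTop, xseq N ∈ K₀ := by
    filter_upwards [hmain K₀ hK₀X hK₀c (1/2) (by norm_num), hout] with N h1 h2
    by_contra hni
    have hA : ((f x' + 1 : ℝ):EReal) ≤ worstCaseP c (𝓖 N) (xseq N) := h2 _ (hxX N) hni
    have hB : worstCaseP c (𝓖 N) (xseq N) ≤ ((f x' + 1/2 : ℝ):EReal) :=
      (hseqmin N x' (hK₀X hxs)).trans
        (Wub fun G hG => by have := (abs_le.1 (h1 x' hxs G hG)).2; linarith)
    have := EReal.coe_le_coe_iff.1 (hA.trans hB); linarith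
  have hex : ∃ p ∈ K₀, MapClusterPt p atTop xseq :=
    hK₀c.exists_mapClusterPt (Filter.le_principal_iff.2 (Filter.mem_map.2 hevK₀))
  refine ⟨⟨hex.choose, hex.choose_spec.2⟩, ?_⟩
  intro p hp
  have hpX : p ∈ X := by
    have h1 : ClusterPt p (Filter.map xseq atTop) := hp
    have h2 : Filter.map xseq atTop ≤ Filter.principal X :=
      Filter.le_principal_iff.2 (Filter.mem_map.2 (Filter.Eventually.of_forall hxX))
    have h3 := h1.mono h2
    rwa [← mem_closure_iff_clusterPt, hXcl.closure_eq] at h3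
  refine ⟨hpX, fun y hy => ?_⟩
  refine le_of_forall_pos_le_add fun ε hε => ?_
  have hε3 : (0:ℝ) < ε/3 := by linarith
  obtain ⟨δ, hδpos, hδ⟩ := hclose p hpX (ε/3) hε3
  have hev : ∀ᶠ N in atTop, (∀ G ∈ 𝓖 N, |(∫ ζ, c p ζ ∂G.toMeasure) - f p| ≤ ε/3) ∧
      worstCaseP c (𝓖 N) y ≤ ((f y + ε/3 : ℝ):EReal) := by
    filter_upwards [hmain {p} (by simpa using hpX) isCompact_singleton (ε/3) hε3,
      hmain {y} (by simpa using hy) isCompact_singleton (ε/3) hε3] with N h1 h2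
    exact ⟨h1 p rfl, Wub fun G hG => by have := (abs_le.1 (h2 y rfl G hG)).2; linarith⟩
  have hfreq : ∃ᶠ N in atTop, ‖p - xseq N‖ < δ := by
    have h4 := (mapClusterPt_iff_frequently.1 hp) (Metric.ball p δ) (Metric.ball_mem_nhds p hδpos)
    refine h4.mono fun N hN => ?_
    rw [Metric.mem_ball, dist_eq_norm] at hN
    rw [norm_sub_rev]; exact hN
  obtain ⟨N, hN1, hN2, hN3⟩ := (hfreq.and_eventually hev).exists
  obtain ⟨G, hG⟩ := h𝓖ne N
  have e2 : |(∫ ζ, c p ζ ∂G.toMeasure) - ∫ ζ, c (xseq N) ζ ∂G.toMeasure| ≤ ε/3 :=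
    hδ (xseq N) (hxX N) hN1 N G hG
  have e3 : ((∫ ζ, c (xseq N) ζ ∂G.toMeasure : ℝ):EReal) ≤ worstCaseP c (𝓖 N) y :=
    (Wmem N (xseq N) G hG).trans (hseqmin N y hy)
  have e4 : (∫ ζ, c (xseq N) ζ ∂G.toMeasure) ≤ f y + ε/3 :=
    EReal.coe_le_coe_iff.1 (e3.trans hN3)
  have e1 := (abs_le.1 (hN2 G hG)).1
  have e5 := (abs_le.1 e2).2
  linarith

/-- c-consistency implies convergence of Robust SAA:
objective functions, optimal values, and optimal solutions.
Under (i) c-consistency of the test with confidence regions `𝓕 N ω`, which almost surely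
contain the empirical distribution, (ii) equicontinuity in `x` and continuity and
integrability in `ξ` of the cost, (iii) closedness of `X` together with boundedness or a
coercivity condition, and (iv) boundedness of `Ξ` or a uniformly-controlled growth
function `φ`, almost surely:
(1) `C(·;𝓕_N) → E_F[c(·;ξ)]` uniformly on compact subsets of `X`;
(2) `inf_{x∈X} C(x;𝓕_N) → inf_{x∈X} E_F[c(x;ξ)]`;
(3) every sequence of robust minimizers has a limit point, and all its limit points
minimize `E_F[c(x;ξ)]` over `X`. -/
theorem stmt7 {d dx : ℕ} {Ω : Type*} [MeasurableSpace Ω]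
    (P : Measure Ω) [IsProbabilityMeasure P]
    (Ξ : Set (EuclideanSpace ℝ (Fin d))) (hΞ : IsClosed Ξ)
    (X : Set (EuclideanSpace ℝ (Fin dx))) (hXne : X.Nonempty) (hXcl : IsClosed X)
    (F : ProbabilityMeasure (EuclideanSpace ℝ (Fin d))) (hFsupp : F.toMeasure Ξᶜ = 0)
    -- i.i.d. data drawn from `F`
    (ξ : ℕ → Ω → EuclideanSpace ℝ (Fin d)) (hξmeas : ∀ i, Measurable (ξ i))
    (hiid : ProbabilityTheory.iIndepFun ξ P)
    (hdist : ∀ i, Measure.map (ξ i) P = F.toMeasure)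
    -- the data-dependent confidence regions
    (𝓕 : ℕ → Ω → Set (ProbabilityMeasure (EuclideanSpace ℝ (Fin d))))
    (h𝓕ne : ∀ N ω, (𝓕 N ω).Nonempty)
    (h𝓕supp : ∀ N ω, ∀ G ∈ 𝓕 N ω, G.toMeasure Ξᶜ = 0)
    -- the cost function
    (c : EuclideanSpace ℝ (Fin dx) → EuclideanSpace ℝ (Fin d) → ℝ)
    (hcmeas : ∀ x ∈ X, Measurable (c x))
    -- (i) c-consistency, and the regions contain the empirical distribution
    (hCC : ∀ᵐ ω ∂P, ∀ G : ℕ → ProbabilityMeasure (EuclideanSpace ℝ (Fin d)),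
      (∀ N, (G N).toMeasure Ξᶜ = 0) →
      ¬ (∀ x ∈ X, Tendsto (fun N => ∫ ζ, c x ζ ∂(G N).toMeasure) atTop
          (𝓝 (∫ ζ, c x ζ ∂F.toMeasure))) →
        ∃ᶠ N in atTop, G N ∉ 𝓕 N ω)
    (hemp : ∀ᵐ ω ∂P, ∀ N : ℕ, 0 < N →
      ∃ G ∈ 𝓕 N ω, G.toMeasure = empiricalMeasure N (fun i => ξ i ω))
    -- (ii) equicontinuity in `x`, continuity in `ξ`, integrability
    (hequi : ∀ x ∈ X, ∀ ε > (0:ℝ), ∃ δ > (0:ℝ), ∀ x' ∈ X, ‖x - x'‖ < δ →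
      ∀ ζ ∈ Ξ, |c x ζ - c x' ζ| < ε)
    (hcont : ∀ x ∈ X, ContinuousOn (c x) Ξ)
    (hFint : ∀ x ∈ X, Integrable (c x) F.toMeasure)
    (h𝓕int : ∀ N ω, ∀ G ∈ 𝓕 N ω, ∀ x ∈ X, Integrable (c x) G.toMeasure)
    -- (iii) `X` bounded, or coercivity
    (hcoerc : Bornology.IsBounded X ∨
      ∃ D : Set (EuclideanSpace ℝ (Fin d)), MeasurableSet D ∧ D ⊆ Ξ ∧
        0 < F.toMeasure D ∧
        (∀ M : ℝ, ∃ R : ℝ, ∀ x ∈ X, R ≤ ‖x‖ → ∀ ζ ∈ D, M ≤ c x ζ) ∧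
        (∃ m R : ℝ, ∀ x ∈ X, R ≤ ‖x‖ → ∀ ζ ∈ Ξ \ D, m ≤ c x ζ))
    -- (iv) `Ξ` bounded, or growth control via `φ`
    (hgrow : Bornology.IsBounded Ξ ∨
      ∃ φ : EuclideanSpace ℝ (Fin d) → ℝ, ContinuousOn φ Ξ ∧ (∀ ζ ∈ Ξ, 0 ≤ φ ζ) ∧
        Integrable φ F.toMeasure ∧
        (∀ N ω, ∀ G ∈ 𝓕 N ω, Integrable φ G.toMeasure) ∧
        (∀ᵐ ω ∂P, ∀ ε > (0:ℝ), ∀ᶠ N in atTop, ∀ G ∈ 𝓕 N ω,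
          |∫ ζ, φ ζ ∂G.toMeasure - (∑ i ∈ Finset.range N, φ (ξ i ω)) / N| ≤ ε) ∧
        (∀ x ∈ X, ∃ ν η : ℝ, ∀ ζ ∈ Ξ, |c x ζ| ≤ ν + η * φ ζ)) :
    ∀ᵐ ω ∂P,
      -- (1) uniform convergence of the objective on compact subsets of `X`
      (∀ K ⊆ X, IsCompact K → ∀ ε > (0:ℝ), ∀ᶠ N in atTop, ∀ x ∈ K,
        (((∫ ζ, c x ζ ∂F.toMeasure) - ε : ℝ) : EReal) ≤ worstCaseP c (𝓕 N ω) x ∧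
          worstCaseP c (𝓕 N ω) x ≤ (((∫ ζ, c x ζ ∂F.toMeasure) + ε : ℝ) : EReal)) ∧
      -- (2) convergence of optimal values
      Tendsto (fun N => ⨅ x ∈ X, worstCaseP c (𝓕 N ω) x) atTop
        (𝓝 (⨅ x ∈ X, ((∫ ζ, c x ζ ∂F.toMeasure : ℝ) : EReal))) ∧
      -- (3) convergence of optimal solutions
      (∀ xseq : ℕ → EuclideanSpace ℝ (Fin dx),
        (∀ N, xseq N ∈ X ∧ ∀ y ∈ X, worstCaseP c (𝓕 N ω) (xseq N) ≤ worstCaseP c (𝓕 N ω) y) →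
        (∃ p, MapClusterPt p atTop xseq) ∧
        (∀ p, MapClusterPt p atTop xseq → p ∈ X ∧
          ∀ y ∈ X, ∫ ζ, c p ζ ∂F.toMeasure ≤ ∫ ζ, c y ζ ∂F.toMeasure)) := by
  classical
  have hfclose : ∀ x ∈ X, ∀ ε > (0:ℝ), ∃ δ > (0:ℝ), ∀ x' ∈ X, ‖x - x'‖ < δ →
      |(∫ ζ, c x ζ ∂F.toMeasure) - ∫ ζ, c x' ζ ∂F.toMeasure| ≤ ε := by
    intro x hx ε hε
    obtain ⟨δ, hδpos, hδ⟩ := hequi x hx ε hε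
    exact ⟨δ, hδpos, fun x' hx' hxx' => aux_int_close hFsupp (hFint x hx) (hFint x' hx')
      (fun ζ hζ => (hδ x' hx' hxx' ζ hζ).le)⟩
  have hfcont : ContinuousOn (fun x => ∫ ζ, c x ζ ∂F.toMeasure) X := by
    rw [Metric.continuousOn_iff]
    intro b hb ε hε
    obtain ⟨δ, hδpos, hδ⟩ := hfclose b hb (ε/2) (by linarith)
    refine ⟨δ, hδpos, fun a ha hab => ?_⟩
    have h1 : ‖b - a‖ < δ := by rw [norm_sub_rev, ← dist_eq_norm]; exact hab
    have h2 := hδ a ha h1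
    rw [Real.dist_eq, abs_sub_comm]
    linarith [h2, abs_nonneg ((∫ ζ, c b ζ ∂F.toMeasure) - ∫ ζ, c a ζ ∂F.toMeasure)]
  -- KEY : uniform closeness over the confidence regions, for each fixed x
  have hKEYae : ∀ᵐ ω ∂P, ∀ x ∈ X, ∀ ε > (0:ℝ), ∀ᶠ N in atTop, ∀ G ∈ 𝓕 N ω,
      |(∫ ζ, c x ζ ∂G.toMeasure) - ∫ ζ, c x ζ ∂F.toMeasure| ≤ ε := by
    filter_upwards [hCC] with ω hccω
    intro x hx ε hε
    by_contra hcon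
    rw [Filter.not_eventually] at hcon
    set Gch : ℕ → ProbabilityMeasure (EuclideanSpace ℝ (Fin d)) := fun N =>
      if h' : ∃ G ∈ 𝓕 N ω, ¬ |(∫ ζ, c x ζ ∂G.toMeasure) - ∫ ζ, c x ζ ∂F.toMeasure| ≤ ε
      then h'.choose else (h𝓕ne N ω).choose with hGch
    have hGmem : ∀ N, Gch N ∈ 𝓕 N ω := by
      intro N
      by_cases h' : ∃ G ∈ 𝓕 N ω, ¬ |(∫ ζ, c x ζ ∂G.toMeasure) - ∫ ζ, c x ζ ∂F.toMeasure| ≤ ε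
      · simp only [hGch, dif_pos h']; exact h'.choose_spec.1
      · simp only [hGch, dif_neg h']; exact (h𝓕ne N ω).choose_spec
    have hGsupp : ∀ N, (Gch N).toMeasure Ξᶜ = 0 := fun N => h𝓕supp N ω _ (hGmem N)
    have hGbad : ∃ᶠ N in atTop,
        ¬ |(∫ ζ, c x ζ ∂(Gch N).toMeasure) - ∫ ζ, c x ζ ∂F.toMeasure| ≤ ε := by
      refine hcon.mono fun N hN => ?_
      push_neg at hN
      obtain ⟨G, hG1, hG2⟩ := hN
      have h' : ∃ G ∈ 𝓕 N ω, ¬ |(∫ ζ, c x ζ ∂G.toMeasure) - ∫ ζ, c x ζ ∂F.toMeasure| ≤ ε :=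
        ⟨G, hG1, not_le.2 hG2⟩
      simp only [hGch, dif_pos h']
      exact h'.choose_spec.2
    have hnc : ¬ (∀ x ∈ X, Tendsto (fun N => ∫ ζ, c x ζ ∂(Gch N).toMeasure) atTop
        (𝓝 (∫ ζ, c x ζ ∂F.toMeasure))) := by
      intro hT
      have h5 := Metric.tendsto_nhds.1 (hT x hx) ε hε
      obtain ⟨N, hb, hl⟩ := (hGbad.and_eventually h5).exists
      rw [Real.dist_eq] at hl
      exact hb hl.le
    obtain ⟨N, hN⟩ := (hccω Gch hGsupp hnc).exists
    exact hN (hGmem N)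
  -- MAIN : uniform closeness on compact subsets
  have hMAINae : ∀ᵐ ω ∂P, ∀ K ⊆ X, IsCompact K → ∀ ε > (0:ℝ), ∀ᶠ N in atTop,
      ∀ x ∈ K, ∀ G ∈ 𝓕 N ω,
        |(∫ ζ, c x ζ ∂G.toMeasure) - ∫ ζ, c x ζ ∂F.toMeasure| ≤ ε := by
    filter_upwards [hKEYae] with ω hkey
    intro K hKX hKc ε hε
    have hε3 : (0:ℝ) < ε/3 := by linarith
    obtain ⟨t, ht⟩ := hKc.elim_nhds_subcover'
      (fun x hx => Metric.ball x (hequi x (hKX hx) (ε/3) hε3).choose)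
      (fun x hx => Metric.ball_mem_nhds _ (hequi x (hKX hx) (ε/3) hε3).choose_spec.1)
    have hev : ∀ᶠ N in atTop, ∀ z ∈ t, ∀ G ∈ 𝓕 N ω,
        |(∫ ζ, c (z:EuclideanSpace ℝ (Fin dx)) ζ ∂G.toMeasure) -
          ∫ ζ, c (z:EuclideanSpace ℝ (Fin dx)) ζ ∂F.toMeasure| ≤ ε/3 := by
      rw [Filter.eventually_all_finset]
      intro z _
      exact hkey z (hKX z.2) (ε/3) hε3
    filter_upwards [hev] with N hN x hx G hG
    have hmem := ht hx
    simp only [Set.mem_iUnion] at hmem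
    obtain ⟨z, hzt, hxz⟩ := hmem
    obtain ⟨hδpos, hδ⟩ := (hequi (z:EuclideanSpace ℝ (Fin dx)) (hKX z.2) (ε/3) hε3).choose_spec
    have hxX : x ∈ X := hKX hx
    have hzX : (z:EuclideanSpace ℝ (Fin dx)) ∈ X := hKX z.2
    have hdistz : ‖(z:EuclideanSpace ℝ (Fin dx)) - x‖ <
        (hequi (z:EuclideanSpace ℝ (Fin dx)) (hKX z.2) (ε/3) hε3).choose := by
      rw [norm_sub_rev, ← dist_eq_norm]
      exact Metric.mem_ball.1 hxz
    have e1 : |(∫ ζ, c x ζ ∂G.toMeasure) -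
        ∫ ζ, c (z:EuclideanSpace ℝ (Fin dx)) ζ ∂G.toMeasure| ≤ ε/3 := by
      have := aux_int_close (h𝓕supp N ω G hG) (h𝓕int N ω G hG _ hzX) (h𝓕int N ω G hG x hxX)
        (fun ζ hζ => (hδ x hxX hdistz ζ hζ).le)
      rwa [abs_sub_comm] at this
    have e2 := hN z hzt G hG
    have e3 : |(∫ ζ, c (z:EuclideanSpace ℝ (Fin dx)) ζ ∂F.toMeasure) -
        ∫ ζ, c x ζ ∂F.toMeasure| ≤ ε/3 :=
      aux_int_close hFsupp (hFint _ hzX) (hFint x hxX)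
        (fun ζ hζ => (hδ x hxX hdistz ζ hζ).le)
    have t1 := abs_sub_le (∫ ζ, c x ζ ∂G.toMeasure)
      (∫ ζ, c (z:EuclideanSpace ℝ (Fin dx)) ζ ∂G.toMeasure) (∫ ζ, c x ζ ∂F.toMeasure)
    have t2 := abs_sub_le (∫ ζ, c (z:EuclideanSpace ℝ (Fin dx)) ζ ∂G.toMeasure)
      (∫ ζ, c (z:EuclideanSpace ℝ (Fin dx)) ζ ∂F.toMeasure) (∫ ζ, c x ζ ∂F.toMeasure)
    linarith
  -- PKG : compact localization of minimizers
  have hPKGae : ∀ᵐ ω ∂P, ∃ K₀ xstar, K₀ ⊆ X ∧ IsCompact K₀ ∧ xstar ∈ K₀ ∧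
      (∀ x ∈ X, (∫ ζ, c xstar ζ ∂F.toMeasure) ≤ ∫ ζ, c x ζ ∂F.toMeasure) ∧
      (∀ᶠ N in atTop, ∀ x ∈ X, x ∉ K₀ →
        (((∫ ζ, c xstar ζ ∂F.toMeasure) + 1 : ℝ) : EReal) ≤ worstCaseP c (𝓕 N ω) x) := by
    rcases hcoerc with hXbd | ⟨D, hD, hDΞ, hFD, hcoD, m, R₃, hm⟩
    · -- bounded case
      have hXcp : IsCompact X := Metric.isCompact_of_isClosed_isBounded hXcl hXbd
      obtain ⟨xstar, hxstarX, hxstarmin⟩ := hXcp.exists_isMinOn hXne hfcont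
      refine Filter.Eventually.of_forall fun ω => ⟨X, xstar, subset_rfl, hXcp, hxstarX,
        fun x hx => isMinOn_iff.1 hxstarmin x hx,
        Filter.Eventually.of_forall fun N x hx hnx => absurd hx hnx⟩
    · -- coercive case
      set αF := (F.toMeasure D).toReal with hαF
      have hαFpos : 0 < αF := ENNReal.toReal_pos hFD.ne' (measure_ne_top _ _)
      obtain ⟨x₀, hx₀X⟩ := hXne
      set m' : ℝ := min m 0 with hm'
      set g0 : ℝ := ∫ ζ, c x₀ ζ ∂F.toMeasure with hg0
      set M₁ : ℝ := (max (g0 + 1 - m') 0) / αF with hM₁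
      set M₂ : ℝ := m' + (max (g0 + 1 - m') 0) / (αF/2) with hM₂
      obtain ⟨R₁, hR₁⟩ := hcoD M₁
      obtain ⟨R₂, hR₂⟩ := hcoD M₂
      set R : ℝ := max (max R₁ R₂) (max R₃ ‖x₀‖) with hR
      set K₀ : Set (EuclideanSpace ℝ (Fin dx)) := X ∩ Metric.closedBall 0 R with hK₀
      have hK₀X : K₀ ⊆ X := Set.inter_subset_left
      have hK₀c : IsCompact K₀ := Metric.isCompact_of_isClosed_isBounded
        (hXcl.inter Metric.isClosed_closedBall)
        (Metric.isBounded_closedBall.subset Set.inter_subset_right)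
      have hx₀K₀ : x₀ ∈ K₀ :=
        ⟨hx₀X, mem_closedBall_zero_iff.2 ((le_max_right R₃ ‖x₀‖).trans (le_max_right _ _))⟩
      obtain ⟨xstar, hxstarK₀, hxstarmin⟩ := hK₀c.exists_isMinOn ⟨x₀, hx₀K₀⟩ (hfcont.mono hK₀X)
      have hxstarg0 : (∫ ζ, c xstar ζ ∂F.toMeasure) ≤ g0 := isMinOn_iff.1 hxstarmin x₀ hx₀K₀
      have hFae : ∀ᵐ ζ ∂F.toMeasure, ζ ∈ Ξ := by
        rw [ae_iff]; exact hFsupp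
      have hRlt : ∀ x ∈ X, x ∉ K₀ → R < ‖x‖ := by
        intro x hxX hxK
        by_contra hh
        push_neg at hh
        exact hxK ⟨hxX, mem_closedBall_zero_iff.2 hh⟩
      -- F-side outside bound
      have hfout : ∀ x ∈ X, x ∉ K₀ → g0 + 1 ≤ ∫ ζ, c x ζ ∂F.toMeasure := by
        intro x hxX hxK
        have hRx := hRlt x hxX hxK
        have hR₁x : R₁ ≤ ‖x‖ :=
          ((le_max_left R₁ R₂).trans (le_max_left _ _)).trans hRx.le
        have hR₃x : R₃ ≤ ‖x‖ :=
          ((le_max_left R₃ ‖x₀‖).trans (le_max_right _ _)).trans hRx.le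
        have hint := hFint x hxX
        have hsplit : (∫ ζ in D, c x ζ ∂F.toMeasure) + ∫ ζ in Dᶜ, c x ζ ∂F.toMeasure
            = ∫ ζ, c x ζ ∂F.toMeasure := integral_add_compl hD hint
        have hD1 : M₁ * αF ≤ ∫ ζ in D, c x ζ ∂F.toMeasure := by
          have h1 : ∫ _ζ in D, M₁ ∂F.toMeasure ≤ ∫ ζ in D, c x ζ ∂F.toMeasure :=
            setIntegral_mono_on (integrableOn_const (measure_ne_top _ _) enorm_ne_top)
              hint.integrableOn hD (fun ζ hζ => hR₁ x hxX hR₁x ζ hζ)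
          rwa [setIntegral_const, smul_eq_mul, mul_comm] at h1
        have hD2 : m' ≤ ∫ ζ in Dᶜ, c x ζ ∂F.toMeasure := by
          have h1 : ∫ _ζ in Dᶜ, m ∂F.toMeasure ≤ ∫ ζ in Dᶜ, c x ζ ∂F.toMeasure := by
            refine setIntegral_mono_ae_restrict
              (integrableOn_const (measure_ne_top _ _) enorm_ne_top)
              hint.integrableOn ((ae_restrict_iff' hD.compl).2 ?_)
            exact hFae.mono fun ζ hζΞ hζD => hm x hxX hR₃x ζ ⟨hζΞ, hζD⟩
          rw [setIntegral_const, smul_eq_mul, measureReal_def] at h1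
          have h2 : (F.toMeasure Dᶜ).toReal ≤ 1 := by
            have h3 : F.toMeasure Dᶜ ≤ 1 := prob_le_one
            calc (F.toMeasure Dᶜ).toReal ≤ (1 : ℝ≥0∞).toReal :=
                  ENNReal.toReal_mono (by simp) h3
              _ = 1 := by simp
          have h4 : (0:ℝ) ≤ (F.toMeasure Dᶜ).toReal := ENNReal.toReal_nonneg
          have h3 : m' ≤ (F.toMeasure Dᶜ).toReal * m := by
            rcases le_or_gt 0 m with hm0 | hm0
            · have := mul_nonneg h4 hm0
              calc m' ≤ 0 := min_le_right _ _
                _ ≤ _ := this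
            · have h5 : (F.toMeasure Dᶜ).toReal * m ≥ 1 * m := by nlinarith
              calc m' ≤ m := min_le_left _ _
                _ = 1 * m := (one_mul m).symm
                _ ≤ _ := h5
          linarith
        have hM₁b : g0 + 1 - m' ≤ M₁ * αF := by
          rw [hM₁, div_mul_cancel₀ _ hαFpos.ne']
          exact le_max_left _ _
        linarith
      refine ?_
      -- SLLN for the indicator of D
      have hYmeas : Measurable (fun ζ => Set.indicator D (fun _ => (1:ℝ)) ζ) :=
        (measurable_const (a := (1:ℝ))).indicator hD
      have hslln0 : ∀ᵐ ω ∂P, Tendsto (fun n : ℕ =>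
          (∑ i ∈ Finset.range n, Set.indicator D (fun _ => (1:ℝ)) (ξ i ω)) / n) atTop
          (𝓝 (∫ ω, Set.indicator D (fun _ => (1:ℝ)) (ξ 0 ω) ∂P)) := by
        apply ProbabilityTheory.strong_law_ae_real
          (fun i ω => Set.indicator D (fun _ => (1:ℝ)) (ξ i ω))
        · refine (integrable_const (1:ℝ)).mono'
            ((hYmeas.comp (hξmeas 0)).aestronglyMeasurable)
            (Filter.Eventually.of_forall fun ω => ?_)
          rw [Real.norm_eq_abs, Set.indicator_apply]
          split <;> simp
        · intro i j hij
          exact (hiid.indepFun hij).comp hYmeas hYmeas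
        · intro i
          have hid : ProbabilityTheory.IdentDistrib (ξ i) (ξ 0) P P :=
            ⟨(hξmeas i).aemeasurable, (hξmeas 0).aemeasurable, by rw [hdist i, hdist 0]⟩
          exact hid.comp hYmeas
      have hEY : (∫ ω, Set.indicator D (fun _ => (1:ℝ)) (ξ 0 ω) ∂P) = αF := by
        have h1 : (∫ ω, Set.indicator D (fun _ => (1:ℝ)) (ξ 0 ω) ∂P)
            = ∫ ζ, Set.indicator D (fun _ => (1:ℝ)) ζ ∂F.toMeasure := by
          rw [← hdist 0, integral_map (hξmeas 0).aemeasurable hYmeas.aestronglyMeasurable]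
        rw [h1, integral_indicator_const (1:ℝ) hD]
        simp [hαF]
        rfl
      rw [hEY] at hslln0
      filter_upwards [hslln0, hemp] with ω hslln hempω
      have hξΞ : ∀ i, ξ i ω ∈ Ξ := by
        intro i
        obtain ⟨G, hG, hGeq⟩ := hempω (i+1) (Nat.succ_pos i)
        have h0 := h𝓕supp (i+1) ω G hG
        rw [hGeq] at h0
        have h2 := aux_empirical_apply_zero _ (hΞ.measurableSet.compl) h0 (Nat.lt_succ_self i)
        simpa using h2
      have hfrac : ∀ᶠ N in atTop, αF/2 ≤
          (∑ i ∈ Finset.range N, Set.indicator D (fun _ => (1:ℝ)) (ξ i ω)) / N :=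
        hslln.eventually (eventually_ge_nhds (by linarith))
      refine ⟨K₀, xstar, hK₀X, hK₀c, hxstarK₀, ?_, ?_⟩
      · intro x hx
        by_cases hxK : x ∈ K₀
        · exact isMinOn_iff.1 hxstarmin x hxK
        · have := hfout x hx hxK
          linarith
      · filter_upwards [hfrac, Filter.eventually_gt_atTop 0] with N hfr hNpos
        intro x hxX hxK
        obtain ⟨G, hG𝓕, hGemp⟩ := hempω N hNpos
        have hRx := hRlt x hxX hxK
        have hR₂x : R₂ ≤ ‖x‖ :=
          ((le_max_right R₁ R₂).trans (le_max_left _ _)).trans hRx.le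
        have hR₃x : R₃ ≤ ‖x‖ :=
          ((le_max_left R₃ ‖x₀‖).trans (le_max_right _ _)).trans hRx.le
        have hIG : ∫ ζ, c x ζ ∂G.toMeasure = (∑ i ∈ Finset.range N, c x (ξ i ω)) / N := by
          rw [hGemp, aux_empirical_integral]
        set S : ℝ := ∑ i ∈ Finset.range N, Set.indicator D (fun _ => (1:ℝ)) (ξ i ω) with hS
        have hterm : ∀ i ∈ Finset.range N,
            m' + (M₂ - m') * Set.indicator D (fun _ => (1:ℝ)) (ξ i ω) ≤ c x (ξ i ω) := by
          intro i _
          by_cases hi : ξ i ω ∈ D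
          · rw [Set.indicator_of_mem hi]
            have := hR₂ x hxX hR₂x _ hi
            linarith
          · rw [Set.indicator_of_notMem hi]
            have := hm x hxX hR₃x _ ⟨hξΞ i, hi⟩
            have h0 : m' ≤ m := min_le_left _ _
            linarith
        have hM₂m' : m' ≤ M₂ := by
          have h0 : 0 ≤ (max (g0 + 1 - m') 0) / (αF/2) :=
            div_nonneg (le_max_right _ _) (by linarith)
          rw [hM₂]; linarith
        have hsum : (N:ℝ) * m' + (M₂ - m') * S ≤ ∑ i ∈ Finset.range N, c x (ξ i ω) := by
          have h0 := Finset.sum_le_sum hterm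
          rw [Finset.sum_add_distrib, Finset.sum_const, ← Finset.mul_sum] at h0
          simpa [nsmul_eq_mul] using h0
        have hSfrac : (αF/2) * N ≤ S := by
          rw [le_div_iff₀ (by exact_mod_cast hNpos : (0:ℝ) < N)] at hfr
          exact hfr
        have hcore : g0 + 1 ≤ m' + (M₂ - m') * (αF/2) := by
          have h0 : (M₂ - m') * (αF/2) = max (g0 + 1 - m') 0 := by
            rw [hM₂, add_sub_cancel_left, div_mul_cancel₀]
            linarith
          rw [h0]
          have := le_max_left (g0 + 1 - m') 0
          linarith
        have s1 : (M₂ - m') * ((αF/2) * N) ≤ (M₂ - m') * S :=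
          mul_le_mul_of_nonneg_left hSfrac (by linarith)
        have s2 : (N:ℝ) * (g0 + 1) ≤ (N:ℝ) * (m' + (M₂ - m') * (αF/2)) :=
          mul_le_mul_of_nonneg_left hcore (Nat.cast_nonneg N)
        have s4 : (N:ℝ) * (m' + (M₂-m')*(αF/2)) = (N:ℝ) * m' + (M₂-m')*((αF/2)*N) := by ring
        have hsumlb : (N:ℝ) * (g0 + 1) ≤ ∑ i ∈ Finset.range N, c x (ξ i ω) := by
          rw [s4] at s2
          refine le_trans (le_trans s2 ?_) hsum
          have := add_le_add_left s1 ((N:ℝ) * m')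
          linarith
        have hdivlb : g0 + 1 ≤ (∑ i ∈ Finset.range N, c x (ξ i ω)) / N := by
          rw [le_div_iff₀ (by exact_mod_cast hNpos : (0:ℝ) < N)]
          linarith
        have hfinal : ((∫ ζ, c xstar ζ ∂F.toMeasure) + 1 : ℝ) ≤ ∫ ζ, c x ζ ∂G.toMeasure := by
          rw [hIG]
          linarith
        calc (((∫ ζ, c xstar ζ ∂F.toMeasure) + 1 : ℝ) : EReal)
            ≤ ((∫ ζ, c x ζ ∂G.toMeasure : ℝ) : EReal) := EReal.coe_le_coe_iff.2 hfinal
          _ ≤ worstCaseP c (𝓕 N ω) x := by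
              simp only [worstCaseP]
              exact le_iSup₂ (f := fun (G : ProbabilityMeasure (EuclideanSpace ℝ (Fin d))) _ =>
                ((∫ ζ, c x ζ ∂G.toMeasure : ℝ) : EReal)) G hG𝓕
  -- Final assembly
  filter_upwards [hMAINae, hPKGae] with ω hmain hpkg
  obtain ⟨K₀, xstar, h1, h2, h3, h4, h5⟩ := hpkg
  have hclose : ∀ x ∈ X, ∀ ε > (0:ℝ), ∃ δ > (0:ℝ), ∀ x' ∈ X, ‖x - x'‖ < δ →
      ∀ N : ℕ, ∀ G ∈ 𝓕 N ω,
        |(∫ ζ, c x ζ ∂G.toMeasure) - ∫ ζ, c x' ζ ∂G.toMeasure| ≤ ε := by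
    intro x hx ε hε
    obtain ⟨δ, hδpos, hδ⟩ := hequi x hx ε hε
    exact ⟨δ, hδpos, fun x' hx' hxx' N G hG => aux_int_close (h𝓕supp N ω G hG)
      (h𝓕int N ω G hG x hx) (h𝓕int N ω G hG x' hx') (fun ζ hζ => (hδ x' hx' hxx' ζ hζ).le)⟩
  exact abstract_final X hXcl c (fun x => ∫ ζ, c x ζ ∂F.toMeasure) (fun N => 𝓕 N ω)
    (fun N => h𝓕ne N ω) hmain hclose K₀ xstar h1 h2 h3 h4 h5
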